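/- Under the model Y = f(X) + ε with ε independent of (X, X'_j), E[ε] = 0, Var(ε) = σ² ∈ (0,∞), and f(X), f(X_{(j)}) square-integrable, the permutation importance is nonnegative, I(X_j) ≥ 0, and I(X_j) > 0 if and only if P(f(X) ≠ f(X_{(j)})) > 0. -/

import Mathlib

open MeasureTheory ProbabilityTheory

/-- The permutation importance is nonnegative, and it is strictly positive if and only
if `P(f(X) ≠ f(X₍ⱼ₎)) > 0`. -/
theorem permutation_importance_nonneg_pos_iff
    {Ω : Type*} [MeasurableSpace Ω] (P : Measure Ω) [IsProbabilityMeasure P]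
    {p : ℕ} (j : Fin p) (X : Ω → (Fin p → ℝ)) (X' : Ω → ℝ) (ε : Ω → ℝ) (Y : Ω → ℝ)
    (f : (Fin p → ℝ) → ℝ) (σ2 : ℝ)
    (hX : Measurable X) (hX' : Measurable X') (hε : Measurable ε) (hf : Measurable f)
    (hident : IdentDistrib X' (fun ω => X ω j) P P)
    (hXindep : IndepFun X' X P)
    (hY : ∀ ω, Y ω = f (X ω) + ε ω)
    (hεindep : IndepFun ε (fun ω => (X ω, X' ω)) P)
    (hεmean : ∫ ω, ε ω ∂P = 0)
    (hεvar : variance ε P = σ2) (hσ2 : 0 < σ2)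
    (hL2 : MemLp (fun ω => f (X ω)) 2 P)
    (hL2' : MemLp (fun ω => f (Function.update (X ω) j (X' ω))) 2 P) :
    0 ≤ (∫ ω, (Y ω - f (Function.update (X ω) j (X' ω))) ^ 2 ∂P)
          - (∫ ω, (Y ω - f (X ω)) ^ 2 ∂P)
    ∧ (0 < (∫ ω, (Y ω - f (Function.update (X ω) j (X' ω))) ^ 2 ∂P)
            - (∫ ω, (Y ω - f (X ω)) ^ 2 ∂P)
        ↔ 0 < P {ω | f (X ω) ≠ f (Function.update (X ω) j (X' ω))}) := by
  set G : Ω → ℝ := fun ω => f (X ω) with hG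
  set H : Ω → ℝ := fun ω => f (Function.update (X ω) j (X' ω)) with hH
  set D : Ω → ℝ := fun ω => G ω - H ω with hD
  -- measurability of the map (x, x') ↦ f x - f (update x j x')
  have hφ : Measurable fun q : (Fin p → ℝ) × ℝ =>
      f q.1 - f (Function.update q.1 j q.2) := by
    have hupd : Measurable fun q : (Fin p → ℝ) × ℝ => Function.update q.1 j q.2 := by
      apply measurable_pi_lambda
      intro i
      by_cases h : i = j
      · subst h
        simpa using measurable_snd
      · simp only [Function.update_apply, if_neg h]
        exact (measurable_pi_apply i).comp measurable_fst
    exact (hf.comp measurable_fst).sub (hf.comp hupd)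
  have hDmeas : Measurable D := by
    have : D = (fun q : (Fin p → ℝ) × ℝ => f q.1 - f (Function.update q.1 j q.2)) ∘
        (fun ω => (X ω, X' ω)) := rfl
    rw [this]
    exact hφ.comp (hX.prodMk hX')
  -- independence of ε and D
  have hind : IndepFun ε D P := hεindep.comp measurable_id hφ
  -- ε is in L²
  have hεL2 : MemLp ε 2 P := by
    by_contra h
    have htop : evariance ε P = ⊤ := evariance_eq_top hε.aestronglyMeasurable h
    rw [variance, htop] at hεvar
    simp at hεvar
    exact absurd hεvar.symm (ne_of_gt hσ2)
  have hDL2 : MemLp D 2 P := hL2.sub hL2'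
  have hDint : Integrable D P := hDL2.integrable (by norm_num)
  have hεint : Integrable ε P := hεL2.integrable (by norm_num)
  have hD2int : Integrable (fun ω => D ω ^ 2) P := hDL2.integrable_sq
  have hε2int : Integrable (fun ω => ε ω ^ 2) P := hεL2.integrable_sq
  have hεDint : Integrable (fun ω => ε ω * D ω) P := hind.integrable_mul hεint hDint
  -- the cross term vanishes
  have hcross : ∫ ω, ε ω * D ω ∂P = 0 := by
    have h := hind.integral_mul_eq_mul_integral hε.aestronglyMeasurable hDmeas.aestronglyMeasurable
    have h2 : ∫ ω, ε ω * D ω ∂P = (∫ ω, ε ω ∂P) * ∫ ω, D ω ∂P := h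
    rw [h2, hεmean, zero_mul]
  -- pointwise expansion
  have hpt : ∀ ω, (Y ω - H ω) ^ 2 =
      D ω ^ 2 + (2 * (ε ω * D ω) + ε ω ^ 2) := by
    intro ω
    have h1 : Y ω - H ω = D ω + ε ω := by rw [hY ω]; simp [hD, hG]; ring
    rw [h1]; ring
  have hYG2 : ∫ ω, (Y ω - G ω) ^ 2 ∂P = ∫ ω, ε ω ^ 2 ∂P :=
    integral_congr_ae (Filter.Eventually.of_forall fun ω => by
      show (Y ω - G ω) ^ 2 = ε ω ^ 2
      simp only [hG, hY ω]; ring)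
  have hsplit : ∫ ω, (Y ω - H ω) ^ 2 ∂P =
      (∫ ω, D ω ^ 2 ∂P) + ((∫ ω, 2 * (ε ω * D ω) ∂P) + ∫ ω, ε ω ^ 2 ∂P) := by
    calc ∫ ω, (Y ω - H ω) ^ 2 ∂P
        = ∫ ω, D ω ^ 2 + (2 * (ε ω * D ω) + ε ω ^ 2) ∂P :=
          integral_congr_ae (Filter.Eventually.of_forall hpt)
      _ = (∫ ω, D ω ^ 2 ∂P) + ∫ ω, 2 * (ε ω * D ω) + ε ω ^ 2 ∂P :=
          integral_add hD2int ((hεDint.const_mul 2).add hε2int)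
      _ = (∫ ω, D ω ^ 2 ∂P) + ((∫ ω, 2 * (ε ω * D ω) ∂P) + ∫ ω, ε ω ^ 2 ∂P) := by
          rw [integral_add (hεDint.const_mul 2) hε2int]
  have hcross2 : ∫ ω, 2 * (ε ω * D ω) ∂P = 0 := by
    rw [integral_const_mul, hcross, mul_zero]
  have hkey : (∫ ω, (Y ω - H ω) ^ 2 ∂P) - (∫ ω, (Y ω - G ω) ^ 2 ∂P)
      = ∫ ω, D ω ^ 2 ∂P := by
    rw [hsplit, hcross2, hYG2]; ring
  have hnn : ∀ ω, 0 ≤ D ω ^ 2 := fun ω => sq_nonneg _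
  have hsupp : Function.support (fun ω => D ω ^ 2) = {ω | G ω ≠ H ω} := by
    ext ω
    simp [Function.support, hD, sub_ne_zero, pow_eq_zero_iff]
  constructor
  · rw [hkey]
    exact integral_nonneg hnn
  · rw [hkey]
    rw [integral_pos_iff_support_of_nonneg hnn hD2int, hsupp]
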